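/- Let T be a rigid object in C and let End_C(T)^op be the opposite of its endomorphism algebra. A map f : X → Y in C belongs to the class S̃ if and only if the induced map Hom_C(T, f) : Hom_C(T, X) → Hom_C(T, Y) of End_C(T)^op-modules is an isomorphism. -/

import Mathlib

/-!
Common setup: `C` is a Hom-finite, Krull-Schmidt (= idempotent complete, given
Hom-finiteness over a field), `k`-linear triangulated category with suspension
functor `Σ = shiftFunctor C (1 : ℤ)`, and `T` is a rigid object of `C`.
-/

noncomputable section

open CategoryTheory CategoryTheory.Limits CategoryTheory.Pretriangulated

universe v u

namespace PaperBM

variable {C : Type u} [Category.{v} C] [Preadditive C] [HasZeroObject C]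
  [HasShift C ℤ] [∀ n : ℤ, (shiftFunctor C n).Additive] [Pretriangulated C]
  [HasFiniteBiproducts C]

/-- `X` lies in `add T`: it is a direct summand of a finite direct sum of copies of `T`. -/
def memAdd (T X : C) : Prop :=
  ∃ (n : ℕ) (s : X ⟶ ⨁ (fun _ : Fin n => T)) (r : (⨁ fun _ : Fin n => T) ⟶ X), s ≫ r = 𝟙 X

/-- `T` is rigid: `Hom_C(T, ΣT) = 0`. -/
def IsRigidObj (T : C) : Prop := ∀ f : T ⟶ (shiftFunctor C (1 : ℤ)).obj T, f = 0

/-- `Y ∈ T^⊥`, i.e. `Hom_C(X, ΣY) = 0` for all `X ∈ add T`. -/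
def memTperp (T Y : C) : Prop :=
  ∀ (X : C), memAdd T X → ∀ f : X ⟶ (shiftFunctor C (1 : ℤ)).obj Y, f = 0

/-- `Y ∈ ⊥T`, i.e. `Hom_C(Y, ΣX) = 0` for all `X ∈ add T`. -/
def memPerpT (T Y : C) : Prop :=
  ∀ (X : C), memAdd T X → ∀ f : Y ⟶ (shiftFunctor C (1 : ℤ)).obj X, f = 0

/-- `Y ∈ ΣT^⊥`, the image of `T^⊥` under the suspension `Σ`. -/
def memSigmaTperp (T Y : C) : Prop :=
  ∃ Z : C, memTperp T Z ∧ Nonempty (Y ≅ (shiftFunctor C (1 : ℤ)).obj Z)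

/-- The map `f` factors through an object belonging to the class `P` of objects. -/
def FactorsThru (P : C → Prop) {A B : C} (f : A ⟶ B) : Prop :=
  ∃ (Z : C) (g : A ⟶ Z) (h : Z ⟶ B), P Z ∧ g ≫ h = f

/-- The class `S̃` of maps `f : X ⟶ Y` such that in a completion
`Σ⁻¹Z →h X →f Y →g Z` of `f` to a triangle (where `A` plays the role of `Σ⁻¹Z`,
so that `Z = ΣA`), both `g` and `h` factor through an object of `ΣT^⊥`. -/
def Stilde (T : C) : MorphismProperty C := fun X Y f =>
  ∃ (A : C) (h : A ⟶ X) (g : Y ⟶ (shiftFunctor C (1 : ℤ)).obj A),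
    (Triangle.mk h f g ∈ distTriang C) ∧
    FactorsThru (memSigmaTperp T) g ∧ FactorsThru (memSigmaTperp T) h

/-- The class `S` of maps `f : X ⟶ Y` such that in a completion
`Σ⁻¹Z →h X →f Y →g Z` of `f` to a triangle (where `A` plays the role of `Σ⁻¹Z`,
so that `Z = ΣA`), `g` factors through an object of `ΣT^⊥` and `Σ⁻¹Z ∈ ΣT^⊥`. -/
def Sclass (T : C) : MorphismProperty C := fun X Y f =>
  ∃ (A : C) (h : A ⟶ X) (g : Y ⟶ (shiftFunctor C (1 : ℤ)).obj A),
    (Triangle.mk h f g ∈ distTriang C) ∧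
    FactorsThru (memSigmaTperp T) g ∧ memSigmaTperp T A

/-- `X ∈ C(T)`: there is a triangle `T₁ → T₀ → X → ΣT₁` with `T₀, T₁ ∈ add T`. -/
def memCT (T X : C) : Prop :=
  ∃ (T₁ T₀ : C) (a : T₁ ⟶ T₀) (b : T₀ ⟶ X) (c : X ⟶ (shiftFunctor C (1 : ℤ)).obj T₁),
    memAdd T T₁ ∧ memAdd T T₀ ∧ (Triangle.mk a b c ∈ distTriang C)

/-- `f : X₀ ⟶ Y` is a right `P`-approximation of `Y`. -/
def IsRightApprox (P : C → Prop) {X₀ Y : C} (f : X₀ ⟶ Y) : Prop :=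
  P X₀ ∧ ∀ (W : C), P W → ∀ g : W ⟶ Y, ∃ g' : W ⟶ X₀, g' ≫ f = g

/-- `f : Y ⟶ X₀` is a left `P`-approximation of `Y`. -/
def IsLeftApprox (P : C → Prop) {Y X₀ : C} (f : Y ⟶ X₀) : Prop :=
  P X₀ ∧ ∀ (W : C), P W → ∀ g : Y ⟶ W, ∃ g' : X₀ ⟶ W, f ≫ g' = g

/-- The map `f : X₀ ⟶ Y` is right minimal. -/
def IsRightMinimal {X₀ Y : C} (f : X₀ ⟶ Y) : Prop :=
  ∀ g : X₀ ⟶ X₀, g ≫ f = f → IsIso g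

/-- The functor `H = Hom_C(T, -) : C ⥤ Mod End_C(T)ᵒᵖ`.  Here, with Mathlib's
conventions, the endomorphism ring `End (Opposite.op T)` of `T` viewed in `Cᵒᵖ` plays
the role of `End_C(T)ᵒᵖ`, so that each `Hom_C(T, X)` is a left module over it. -/
def endOpRingHom (T : C) : End (Opposite.op T) →+* (End T)ᵐᵒᵖ where
  toFun r := MulOpposite.op r.unop
  map_one' := rfl
  map_mul' _ _ := rfl
  map_zero' := rfl
  map_add' _ _ := rfl

abbrev homFunctor (T : C) : C ⥤ ModuleCat.{v} (End (Opposite.op T)) :=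
  preadditiveCoyonedaObj T ⋙ ModuleCat.restrictScalars.{v} (endOpRingHom T)

/-- The predicate on `End_C(T)ᵒᵖ`-modules of being finite-dimensional (equivalently,
since `End_C(T)` is a finite-dimensional algebra, finitely generated). -/
abbrev isFinDim (T : C) : ModuleCat.{v} (End (Opposite.op T)) → Prop :=
  fun M => Module.Finite (End (Opposite.op T)) M

/-- The category `mod End_C(T)ᵒᵖ` of finite-dimensional `End_C(T)ᵒᵖ`-modules. -/
abbrev fdMod (T : C) := ObjectProperty.FullSubcategory (isFinDim T)

/-- The ideal relation on `C(T)` of maps factoring through an object of `ΣT^⊥`. -/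
def homRelCT (T : C) : HomRel (ObjectProperty.FullSubcategory (memCT T)) :=
  fun A B f g => FactorsThru (memSigmaTperp T) ((f.hom - g.hom : A.obj ⟶ B.obj))

/-- The ideal relation on `C(T)` of maps factoring through an object of `add ΣT`. -/
def homRelCTadd (T : C) : HomRel (ObjectProperty.FullSubcategory (memCT T)) :=
  fun A B f g => FactorsThru (memAdd ((shiftFunctor C (1 : ℤ)).obj T)) ((f.hom - g.hom : A.obj ⟶ B.obj))

/-- The ideal relation on `C` of maps factoring through an object of `add ΣT`. -/
def homRelAdd (T : C) : HomRel C :=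
  fun A B f g => FactorsThru (memAdd ((shiftFunctor C (1 : ℤ)).obj T)) (f - g)

end PaperBM

open PaperBM

section Aux

variable {C : Type u} [Category.{v} C] [Preadditive C] [HasZeroObject C]
  [HasShift C ℤ] [∀ n : ℤ, (shiftFunctor C n).Additive] [Pretriangulated C]
  [HasFiniteBiproducts C]

lemma aux_memAdd_self (T : C) : memAdd T T := by
  refine ⟨1, biproduct.lift (fun _ => 𝟙 T), biproduct.π _ 0, ?_⟩
  simp

lemma aux_hom_zero_of_sigmaTperp {T W : C} (hW : memSigmaTperp T W) (u : T ⟶ W) : u = 0 := by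
  obtain ⟨Z, hZ, ⟨e⟩⟩ := hW
  have h0 : u ≫ e.hom = 0 := hZ T (aux_memAdd_self T) (u ≫ e.hom)
  have : u = (u ≫ e.hom) ≫ e.inv := by simp
  rw [this, h0, Limits.zero_comp]

lemma aux_sigmaTperp_of_hom_zero {T W : C} (hW : ∀ u : T ⟶ W, u = 0) :
    memSigmaTperp T W := by
  refine ⟨(shiftFunctor C (-1 : ℤ)).obj W, ?_, ⟨((shiftEquiv C (1 : ℤ)).counitIso.app W).symm⟩⟩
  rintro V ⟨n, s, r, hsr⟩ g
  set e : (shiftFunctor C (1 : ℤ)).obj ((shiftFunctor C (-1 : ℤ)).obj W) ≅ W :=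
    (shiftEquiv C (1 : ℤ)).counitIso.app W
  have hr : r ≫ g = 0 := by
    apply biproduct.hom_ext'
    intro j
    have : (biproduct.ι (fun _ : Fin n => T) j ≫ r ≫ g) ≫ e.hom = 0 :=
      hW _
    have h2 : biproduct.ι (fun _ : Fin n => T) j ≫ r ≫ g =
        ((biproduct.ι (fun _ : Fin n => T) j ≫ r ≫ g) ≫ e.hom) ≫ e.inv := by simp
    rw [h2, this]
    simp
  calc g = (s ≫ r) ≫ g := by rw [hsr]; simp
  _ = s ≫ r ≫ g := by simp
  _ = 0 := by rw [hr]; simp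

variable {k : Type*} [Field k] [CategoryTheory.Linear k C]
  [∀ X Y : C, FiniteDimensional k (X ⟶ Y)]

lemma aux_exists_approx (k : Type*) [Field k] [CategoryTheory.Linear k C]
    [∀ X Y : C, FiniteDimensional k (X ⟶ Y)] (T A : C) :
    ∃ (n : ℕ) (α : (⨁ fun _ : Fin n => T) ⟶ A),
      ∀ u : T ⟶ A, ∃ v : T ⟶ ⨁ (fun _ : Fin n => T), v ≫ α = u := by
  let b := Module.finBasis k (T ⟶ A)
  refine ⟨Module.finrank k (T ⟶ A), biproduct.desc (fun i => b i), fun u => ?_⟩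
  refine ⟨biproduct.lift (fun i => b.repr u i • 𝟙 T), ?_⟩
  rw [biproduct.lift_desc]
  have : ∀ i, (b.repr u i • 𝟙 T) ≫ b i = b.repr u i • b i := by
    intro i; rw [Linear.smul_comp, Category.id_comp]
  simp_rw [this]
  exact b.sum_repr u

lemma aux_hom_zero_cone {T : C} (hT : IsRigidObj T) {n : ℕ} {A B : C}
    {α : (⨁ fun _ : Fin n => T) ⟶ A} {β : A ⟶ B}
    {γ : B ⟶ (shiftFunctor C (1 : ℤ)).obj (⨁ fun _ : Fin n => T)}
    (hTri : Triangle.mk α β γ ∈ distTriang C)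
    (hsurj : ∀ u : T ⟶ A, ∃ v, v ≫ α = u) (u : T ⟶ B) : u = 0 := by
  have h1 : u ≫ γ = 0 := by
    have htot : (𝟙 ((shiftFunctor C (1 : ℤ)).obj (⨁ fun _ : Fin n => T))) =
        ∑ j : Fin n, (shiftFunctor C (1 : ℤ)).map (biproduct.π (fun _ : Fin n => T) j) ≫
          (shiftFunctor C (1 : ℤ)).map (biproduct.ι (fun _ : Fin n => T) j) := by
      calc 𝟙 ((shiftFunctor C (1 : ℤ)).obj (⨁ fun _ : Fin n => T))
          = (shiftFunctor C (1 : ℤ)).map (𝟙 _) := (CategoryTheory.Functor.map_id _ _).symm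
      _ = (shiftFunctor C (1 : ℤ)).map
            (∑ j : Fin n, biproduct.π (fun _ : Fin n => T) j ≫
              biproduct.ι (fun _ : Fin n => T) j) := by rw [biproduct.total]
      _ = _ := by rw [Functor.map_sum]; simp [Functor.map_comp]
    calc u ≫ γ = (u ≫ γ) ≫ 𝟙 _ := by simp
    _ = ∑ j : Fin n, (u ≫ γ ≫ (shiftFunctor C (1 : ℤ)).map (biproduct.π (fun _ : Fin n => T) j))
          ≫ (shiftFunctor C (1 : ℤ)).map (biproduct.ι (fun _ : Fin n => T) j) := by
      rw [htot, Preadditive.comp_sum]; simp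
    _ = 0 := by
      refine Finset.sum_eq_zero fun j _ => ?_
      rw [hT (u ≫ γ ≫ (shiftFunctor C (1 : ℤ)).map (biproduct.π (fun _ : Fin n => T) j))]
      simp
  obtain ⟨w, hw⟩ := Triangle.coyoneda_exact₃ _ hTri u h1
  obtain ⟨v, hv⟩ := hsurj w
  have hz : α ≫ β = 0 := comp_distTriang_mor_zero₁₂ _ hTri
  rw [hw, ← hv]
  change (v ≫ α) ≫ β = 0
  rw [Category.assoc]
  change v ≫ α ≫ β = 0
  rw [hz]; simp

lemma aux_factors_of_hom_zero {T : C} (hT : IsRigidObj T)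
    (k : Type*) [Field k] [CategoryTheory.Linear k C]
    [∀ X Y : C, FiniteDimensional k (X ⟶ Y)]
    {A E : C} (h : A ⟶ E) (hz : ∀ u : T ⟶ A, u ≫ h = 0) :
    FactorsThru (memSigmaTperp T) h := by
  obtain ⟨n, α, hα⟩ := aux_exists_approx k T A
  obtain ⟨B, β, γ, hTri⟩ := Pretriangulated.distinguished_cocone_triangle α
  have hB : ∀ u : T ⟶ B, u = 0 := fun u => aux_hom_zero_cone hT hTri hα u
  have hαh : α ≫ h = 0 := by
    apply biproduct.hom_ext'
    intro j
    rw [← Category.assoc, hz (biproduct.ι (fun _ : Fin n => T) j ≫ α)]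
    simp
  obtain ⟨h', hh'⟩ := Triangle.yoneda_exact₂ _ hTri h hαh
  exact ⟨B, β, h', aux_sigmaTperp_of_hom_zero hB, hh'.symm⟩

end Aux

/-- A map `f : X ⟶ Y` belongs to `S̃` if and only if the induced map
`Hom_C(T, f) : Hom_C(T, X) ⟶ Hom_C(T, Y)` of `End_C(T)ᵒᵖ`-modules is an isomorphism. -/
theorem statement_6 {C : Type u} [Category.{v} C] [Preadditive C] [HasZeroObject C]
    [HasShift C ℤ] [∀ n : ℤ, (shiftFunctor C n).Additive] [Pretriangulated C]
    [HasFiniteBiproducts C]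
    {k : Type*} [Field k] [CategoryTheory.Linear k C]
    [∀ X Y : C, FiniteDimensional k (X ⟶ Y)] [IsIdempotentComplete C]
    (T : C) (hT : IsRigidObj T) {X Y : C} (f : X ⟶ Y) :
    Stilde T f ↔ IsIso ((homFunctor T).map f) := by
  have happ : ∀ (u : T ⟶ X), ((homFunctor T).map f) (show (homFunctor T).obj X from u) = u ≫ f := fun u => rfl
  constructor
  · rintro ⟨A, h, g, hTri, ⟨Wg, g₁, g₂, hWg, hgfac⟩, ⟨Wh, h₁, h₂, hWh, hhfac⟩⟩
    have hinj : ∀ x : T ⟶ X, x ≫ f = 0 → x = 0 := by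
      intro x hx
      obtain ⟨w, hw⟩ := Triangle.coyoneda_exact₂ _ hTri x hx
      have hw1 : w ≫ h₁ = 0 := aux_hom_zero_of_sigmaTperp hWh (w ≫ h₁)
      rw [hw]
      change w ≫ h = 0
      subst hhfac
      have h3 : (w ≫ h₁) ≫ h₂ = 0 := by rw [hw1, Limits.zero_comp]
      exact (Category.assoc _ _ _).symm.trans h3
    have hsurj : ∀ y : T ⟶ Y, ∃ x : T ⟶ X, x ≫ f = y := by
      intro y
      have hy : y ≫ g = 0 := by
        change y ≫ g = 0
        rw [← hgfac, ← Category.assoc,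
          aux_hom_zero_of_sigmaTperp hWg (y ≫ g₁), Limits.zero_comp]
      obtain ⟨x, hx⟩ := Triangle.coyoneda_exact₃ _ hTri y hy
      exact ⟨x, hx.symm⟩
    rw [ConcreteCategory.isIso_iff_bijective]
    constructor
    · intro a b hab
      have hab' : ((homFunctor T).map f) a = ((homFunctor T).map f) b := hab
      have hsub : ((a : T ⟶ X) - b) ≫ f = 0 := by
        have e : (a : T ⟶ X) ≫ f = (b : T ⟶ X) ≫ f := hab'
        exact (Preadditive.sub_comp _ _ _).trans (sub_eq_zero.mpr e)
      have := hinj _ hsub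
      exact sub_eq_zero.mp this
    · intro y
      obtain ⟨x, hx⟩ := hsurj (y : T ⟶ Y)
      exact ⟨show (homFunctor T).obj X from x, hx⟩
  · intro hiso
    obtain ⟨A, h, g, hTri⟩ := Pretriangulated.distinguished_cocone_triangle₁ f
    have hbij : Function.Bijective ((forget _).map ((homFunctor T).map f)) := by
      rw [← ConcreteCategory.isIso_iff_bijective]
      infer_instance
    have hsurj : ∀ y : T ⟶ Y, ∃ x : T ⟶ X, x ≫ f = y := by
      intro y
      obtain ⟨x, hx⟩ := hbij.2 (show (homFunctor T).obj Y from y)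
      exact ⟨(x : T ⟶ X), hx⟩
    have hinj : ∀ x : T ⟶ X, x ≫ f = 0 → x = 0 := by
      intro x hx
      have h0 : (0 : T ⟶ X) ≫ f = 0 := by simp
      exact hbij.1 (show (x ≫ f : T ⟶ Y) = (0 : T ⟶ X) ≫ f by rw [hx, h0])
    have hg : FactorsThru (memSigmaTperp T) g := by
      apply aux_factors_of_hom_zero hT k
      intro y
      obtain ⟨x, hx⟩ := hsurj y
      have : f ≫ g = 0 := comp_distTriang_mor_zero₂₃ _ hTri
      rw [← hx, Category.assoc, this, Limits.comp_zero]
    have hh : FactorsThru (memSigmaTperp T) h := by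
      apply aux_factors_of_hom_zero hT k
      intro a
      apply hinj
      have : h ≫ f = 0 := comp_distTriang_mor_zero₁₂ _ hTri
      rw [Category.assoc, this, Limits.comp_zero]
    exact ⟨A, h, g, hTri, hg, hh⟩
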